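/- Let A be a bounded linear operator on ℓ² with matrix entries A_i^j. Define the matrix Ã by Ã_i^j = |A_i^j|/(1+|i-j|). Then Ã defines a bounded operator on ℓ², and there is an absolute constant C such that ‖Ã‖ ≤ C‖A‖. -/

import Mathlib

open scoped ENNReal NNReal

/-- Cauchy–Schwarz for ENNReal tsums of NNReal-valued functions. -/
lemma cs_tsum {ι : Type*} (f g : ι → ℝ≥0) :
    (∑' i, (f i : ℝ≥0∞) * g i) ^ 2 ≤ (∑' i, (f i : ℝ≥0∞) ^ 2) * ∑' i, (g i : ℝ≥0∞) ^ 2 := by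
  have key : ∀ s : Finset ι, (∑ i ∈ s, (f i : ℝ≥0∞) * g i) ^ 2
      ≤ (∑' i, (f i : ℝ≥0∞) ^ 2) * ∑' i, (g i : ℝ≥0∞) ^ 2 := by
    intro s
    have h1 : (∑ i ∈ s, (f i : ℝ≥0∞) * g i) ^ 2
        = (((∑ i ∈ s, f i * g i) ^ 2 : ℝ≥0) : ℝ≥0∞) := by push_cast; ring
    have h2 : ((∑ i ∈ s, f i * g i) ^ 2 : ℝ≥0) ≤ (∑ i ∈ s, f i ^ 2) * ∑ i ∈ s, g i ^ 2 :=
      Finset.sum_mul_sq_le_sq_mul_sq s f g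
    calc (∑ i ∈ s, (f i : ℝ≥0∞) * g i) ^ 2
        = (((∑ i ∈ s, f i * g i) ^ 2 : ℝ≥0) : ℝ≥0∞) := h1
      _ ≤ (((∑ i ∈ s, f i ^ 2) * ∑ i ∈ s, g i ^ 2 : ℝ≥0) : ℝ≥0∞) := ENNReal.coe_le_coe.2 h2
      _ = (∑ i ∈ s, (f i : ℝ≥0∞) ^ 2) * ∑ i ∈ s, (g i : ℝ≥0∞) ^ 2 := by push_cast; ring
      _ ≤ (∑' i, (f i : ℝ≥0∞) ^ 2) * ∑' i, (g i : ℝ≥0∞) ^ 2 := by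
          gcongr <;> exact ENNReal.sum_le_tsum s
  classical
  rw [pow_two, ENNReal.tsum_eq_iSup_sum, ENNReal.iSup_mul]
  refine iSup_le fun s => ?_
  rw [ENNReal.mul_iSup]
  refine iSup_le fun t => ?_
  calc (∑ i ∈ s, (f i : ℝ≥0∞) * g i) * ∑ i ∈ t, (f i : ℝ≥0∞) * g i
      ≤ (∑ i ∈ s ∪ t, (f i : ℝ≥0∞) * g i) * ∑ i ∈ s ∪ t, (f i : ℝ≥0∞) * g i := by
        gcongr
        exacts [Finset.subset_union_left, Finset.subset_union_right] 
    _ = (∑ i ∈ s ∪ t, (f i : ℝ≥0∞) * g i) ^ 2 := (pow_two _).symm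
    _ ≤ _ := key _

lemma ennreal_le_of_sq_le_sq {a b : ℝ≥0∞} (h : a ^ 2 ≤ b ^ 2) : a ≤ b := by
  have h2 := ENNReal.rpow_le_rpow h (by norm_num : (0:ℝ) ≤ 1/2)
  rw [← ENNReal.rpow_natCast a 2, ← ENNReal.rpow_natCast b 2,
    ← ENNReal.rpow_mul, ← ENNReal.rpow_mul] at h2
  norm_num at h2
  exact h2

/-- weight as NNReal -/
noncomputable def nu (n : ℤ) : ℝ≥0 := ((1 + (n.natAbs : ℝ≥0))⁻¹) ^ 2

lemma summable_nu : Summable nu := by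
  rw [← NNReal.summable_coe]
  have hnat : Summable (fun n : ℕ => ((1 + (n : ℝ))⁻¹) ^ 2) := by
    have h := (summable_nat_add_iff (f := fun n : ℕ => ((n : ℝ))⁻¹ ^ 2) 1).2
      (by simpa [inv_pow] using Real.summable_one_div_nat_pow.2 (by norm_num : 1 < 2))
    refine h.congr fun n => by push_cast; ring_nf
  refine Summable.of_nat_of_neg ?_ ?_ <;>
    · refine hnat.congr fun n => ?_
      simp [nu]

/-- The Hilbert space `ℓ²` of square-summable complex sequences indexed by `ℕ⁺`. -/
noncomputable abbrev ell2 : Type := lp (fun _ : ℕ+ => ℂ) 2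

/-- The matrix entry `A_i^j` of a bounded operator `A` on `ℓ²`. -/
noncomputable def entry (A : ell2 →L[ℂ] ell2) (i j : ℕ+) : ℂ :=
  (A (lp.single 2 j 1) : ∀ _ : ℕ+, ℂ) i

/-- bridge: ∑' of squared nnnorms of an lp-2 element equals its squared enorm -/
lemma ell2_tsum_sq (f : ell2) :
    ∑' i, (‖(f : ∀ _ : ℕ+, ℂ) i‖₊ : ℝ≥0∞) ^ 2 = (‖f‖₊ : ℝ≥0∞) ^ 2 := by
  have hp : (0:ℝ) < (2 : ℝ≥0∞).toReal := by norm_num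
  have h := lp.hasSum_norm hp f
  simp only [show ((2:ℝ≥0∞)).toReal = ((2:ℕ):ℝ) from by norm_num, Real.rpow_natCast] at h
  have hsum : Summable fun i => ‖(f : ∀ _ : ℕ+, ℂ) i‖ ^ (2 : ℕ) := h.summable
  have h2 : ∑' i, ‖(f : ∀ _ : ℕ+, ℂ) i‖ ^ (2:ℕ) = ‖f‖ ^ (2:ℕ) := h.tsum_eq
  calc ∑' i, (‖(f : ∀ _ : ℕ+, ℂ) i‖₊ : ℝ≥0∞) ^ 2
      = ∑' i, ENNReal.ofReal (‖(f : ∀ _ : ℕ+, ℂ) i‖ ^ (2:ℕ)) := by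
        refine tsum_congr fun i => ?_
        rw [ENNReal.ofReal_pow (norm_nonneg _), ofReal_norm, enorm_eq_nnnorm]
    _ = ENNReal.ofReal (∑' i, ‖(f : ∀ _ : ℕ+, ℂ) i‖ ^ (2:ℕ)) :=
        (ENNReal.ofReal_tsum_of_nonneg (fun i => by positivity) hsum).symm
    _ = (‖f‖₊ : ℝ≥0∞) ^ 2 := by
        rw [h2, ENNReal.ofReal_pow (norm_nonneg _), ofReal_norm, enorm_eq_nnnorm]

lemma norm_single_one (j : ℕ+) : ‖(lp.single 2 j 1 : ell2)‖ = 1 := by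
  have := lp.norm_single (p := 2) (E := fun _ : ℕ+ => ℂ) (by norm_num) j (1:ℂ)
  simpa using this

lemma entry_eq_adjoint (A : ell2 →L[ℂ] ell2) (i j : ℕ+) :
    entry A i j = starRingEnd ℂ ((ContinuousLinearMap.adjoint A (lp.single 2 i 1) : ∀ _ : ℕ+, ℂ) j) := by
  have h1 : (inner ℂ (lp.single 2 i 1 : ell2) (A (lp.single 2 j 1)) : ℂ) = entry A i j := by
    rw [lp.inner_single_left]
    simp [entry]
  have h2 : (inner ℂ (ContinuousLinearMap.adjoint A (lp.single 2 i 1) : ell2) (lp.single 2 j 1 : ell2) : ℂ)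
      = starRingEnd ℂ ((ContinuousLinearMap.adjoint A (lp.single 2 i 1) : ∀ _ : ℕ+, ℂ) j) := by
    rw [lp.inner_single_right]
    simp
  rw [← h1, ← h2, ContinuousLinearMap.adjoint_inner_left]

lemma col2 (A : ell2 →L[ℂ] ell2) (j : ℕ+) :
    ∑' i, (‖entry A i j‖₊ : ℝ≥0∞) ^ 2 ≤ (‖A‖₊ : ℝ≥0∞) ^ 2 := by
  have h := ell2_tsum_sq (A (lp.single 2 j 1))
  have heq : ∑' i, (‖entry A i j‖₊ : ℝ≥0∞) ^ 2
      = (‖A (lp.single 2 j 1)‖₊ : ℝ≥0∞) ^ 2 := h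
  rw [heq]
  have : ‖A (lp.single 2 j 1)‖ ≤ ‖A‖ := by
    calc ‖A (lp.single 2 j 1)‖ ≤ ‖A‖ * ‖(lp.single 2 j 1 : ell2)‖ := A.le_opNorm _
      _ = ‖A‖ := by rw [norm_single_one]; ring
  gcongr
  exact this

lemma row2 (A : ell2 →L[ℂ] ell2) (i : ℕ+) :
    ∑' j, (‖entry A i j‖₊ : ℝ≥0∞) ^ 2 ≤ (‖A‖₊ : ℝ≥0∞) ^ 2 := by
  set g := ContinuousLinearMap.adjoint A (lp.single 2 i 1) with hg
  have h1 : ∀ j, ‖entry A i j‖₊ = ‖(g : ∀ _ : ℕ+, ℂ) j‖₊ := by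
    intro j; rw [entry_eq_adjoint]; simp [hg]
  have h := ell2_tsum_sq g
  calc ∑' j, (‖entry A i j‖₊ : ℝ≥0∞) ^ 2 = ∑' j, (‖(g : ∀ _ : ℕ+, ℂ) j‖₊ : ℝ≥0∞) ^ 2 := by
        simp_rw [h1]
    _ = (‖g‖₊ : ℝ≥0∞) ^ 2 := h
    _ ≤ (‖A‖₊ : ℝ≥0∞) ^ 2 := by
        gcongr
        calc ‖g‖ ≤ ‖ContinuousLinearMap.adjoint A‖ * ‖(lp.single 2 i 1 : ell2)‖ :=
            (ContinuousLinearMap.adjoint A).le_opNorm _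
          _ = ‖A‖ := by
            rw [norm_single_one, (ContinuousLinearMap.adjoint (𝕜 := ℂ)).norm_map A]; ring

noncomputable def wgt (i j : ℕ+) : ℝ≥0 := (1 + (((i:ℤ) - (j:ℤ)).natAbs : ℝ≥0))⁻¹

lemma wgt_symm (i j : ℕ+) : wgt i j = wgt j i := by
  unfold wgt
  rw [← Int.natAbs_neg]; ring_nf

lemma wgt_sq_eq_nu (i j : ℕ+) : wgt i j ^ 2 = nu ((j:ℤ) - (i:ℤ)) := by
  unfold wgt nu
  rw [← Int.natAbs_neg]; ring_nf

noncomputable def s0 : ℝ≥0 := ∑' n : ℤ, nu n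

lemma one_le_s0 : 1 ≤ s0 := by
  have := Summable.le_tsum summable_nu 0 (fun _ _ => zero_le)
  rw [s0]
  simpa [nu] using this

lemma wgt_row_sum (i : ℕ+) : ∑' j : ℕ+, ((wgt i j : ℝ≥0∞)) ^ 2 ≤ (s0 : ℝ≥0∞) := by
  have hinj : Function.Injective (fun j : ℕ+ => (j : ℤ) - (i : ℤ)) := by
    intro a b h; simp only [sub_left_inj] at h; exact_mod_cast h
  calc ∑' j : ℕ+, ((wgt i j : ℝ≥0∞)) ^ 2
      = ∑' j : ℕ+, ((nu ((j:ℤ) - (i:ℤ)) : ℝ≥0) : ℝ≥0∞) := by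
        refine tsum_congr fun j => ?_
        rw [← wgt_sq_eq_nu]; push_cast; ring
    _ ≤ ∑' n : ℤ, ((nu n : ℝ≥0) : ℝ≥0∞) := ENNReal.tsum_comp_le_tsum_of_injective hinj _
    _ = (s0 : ℝ≥0∞) := (ENNReal.coe_tsum summable_nu).symm

noncomputable def Kmat (A : ell2 →L[ℂ] ell2) (i j : ℕ+) : ℝ≥0 := ‖entry A i j‖₊ * wgt i j

noncomputable def rho (A : ell2 →L[ℂ] ell2) : ℝ≥0 := ‖A‖₊ * NNReal.sqrt s0

lemma rho_sq (A : ell2 →L[ℂ] ell2) :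
    ((rho A : ℝ≥0∞)) ^ 2 = (‖A‖₊ : ℝ≥0∞) ^ 2 * (s0 : ℝ≥0∞) := by
  rw [rho]; push_cast [mul_pow]
  congr 1
  rw [← ENNReal.coe_pow]
  norm_cast
  exact NNReal.sq_sqrt s0

lemma Kmat_row_sum (A : ell2 →L[ℂ] ell2) (i : ℕ+) :
    ∑' j, (Kmat A i j : ℝ≥0∞) ≤ (rho A : ℝ≥0∞) := by
  refine ennreal_le_of_sq_le_sq ?_
  rw [rho_sq]
  calc (∑' j, (Kmat A i j : ℝ≥0∞)) ^ 2
      = (∑' j, (‖entry A i j‖₊ : ℝ≥0∞) * (wgt i j : ℝ≥0∞)) ^ 2 := by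
        simp_rw [Kmat]; push_cast; rfl
    _ ≤ (∑' j, (‖entry A i j‖₊ : ℝ≥0∞) ^ 2) * ∑' j, ((wgt i j : ℝ≥0∞)) ^ 2 :=
        cs_tsum _ _
    _ ≤ (‖A‖₊ : ℝ≥0∞) ^ 2 * (s0 : ℝ≥0∞) := by
        gcongr
        exacts [row2 A i, wgt_row_sum i]

lemma Kmat_col_sum (A : ell2 →L[ℂ] ell2) (j : ℕ+) :
    ∑' i, (Kmat A i j : ℝ≥0∞) ≤ (rho A : ℝ≥0∞) := by
  refine ennreal_le_of_sq_le_sq ?_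
  rw [rho_sq]
  calc (∑' i, (Kmat A i j : ℝ≥0∞)) ^ 2
      = (∑' i, (‖entry A i j‖₊ : ℝ≥0∞) * (wgt j i : ℝ≥0∞)) ^ 2 := by
        simp_rw [Kmat, wgt_symm j]; push_cast; rfl
    _ ≤ (∑' i, (‖entry A i j‖₊ : ℝ≥0∞) ^ 2) * ∑' i, ((wgt j i : ℝ≥0∞)) ^ 2 :=
        cs_tsum _ _
    _ ≤ (‖A‖₊ : ℝ≥0∞) ^ 2 * (s0 : ℝ≥0∞) := by
        gcongr
        exacts [col2 A j, wgt_row_sum j]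

noncomputable def Tfun (A : ell2 →L[ℂ] ell2) (x : ell2) (i : ℕ+) : ℝ≥0∞ :=
  ∑' j, (Kmat A i j : ℝ≥0∞) * (‖x j‖₊ : ℝ≥0∞)

lemma T_sq_le (A : ell2 →L[ℂ] ell2) (x : ell2) (i : ℕ+) :
    Tfun A x i ^ 2 ≤ (rho A : ℝ≥0∞) * ∑' j, (Kmat A i j : ℝ≥0∞) * (‖x j‖₊ : ℝ≥0∞) ^ 2 := by
  have h := cs_tsum (fun j => NNReal.sqrt (Kmat A i j))
    (fun j => NNReal.sqrt (Kmat A i j) * ‖x j‖₊)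
  have e1 : ∀ j : ℕ+, ((NNReal.sqrt (Kmat A i j) : ℝ≥0∞))
      * ((NNReal.sqrt (Kmat A i j) * ‖x j‖₊ : ℝ≥0) : ℝ≥0∞)
      = (Kmat A i j : ℝ≥0∞) * (‖x j‖₊ : ℝ≥0∞) := by
    intro j
    rw [← ENNReal.coe_mul, ← ENNReal.coe_mul, ← mul_assoc, NNReal.mul_self_sqrt]
  have e2 : ∀ j : ℕ+, ((NNReal.sqrt (Kmat A i j) : ℝ≥0∞)) ^ 2 = (Kmat A i j : ℝ≥0∞) := by
    intro j; rw [← ENNReal.coe_pow, NNReal.sq_sqrt]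
  have e3 : ∀ j : ℕ+, (((NNReal.sqrt (Kmat A i j) * ‖x j‖₊ : ℝ≥0)) : ℝ≥0∞) ^ 2
      = (Kmat A i j : ℝ≥0∞) * (‖x j‖₊ : ℝ≥0∞) ^ 2 := by
    intro j
    rw [← ENNReal.coe_pow, mul_pow, NNReal.sq_sqrt, ENNReal.coe_mul, ENNReal.coe_pow]
  simp only [e1, e2, e3] at h
  refine h.trans ?_
  gcongr
  exact Kmat_row_sum A i

lemma schur (A : ell2 →L[ℂ] ell2) (x : ell2) :
    ∑' i, Tfun A x i ^ 2 ≤ (rho A : ℝ≥0∞) ^ 2 * (‖x‖₊ : ℝ≥0∞) ^ 2 := by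
  calc ∑' i, Tfun A x i ^ 2
      ≤ ∑' i, (rho A : ℝ≥0∞) * ∑' j, (Kmat A i j : ℝ≥0∞) * (‖x j‖₊ : ℝ≥0∞) ^ 2 :=
        Summable.tsum_le_tsum (T_sq_le A x) ENNReal.summable ENNReal.summable
    _ = (rho A : ℝ≥0∞) * ∑' i, ∑' j, (Kmat A i j : ℝ≥0∞) * (‖x j‖₊ : ℝ≥0∞) ^ 2 :=
        ENNReal.tsum_mul_left
    _ = (rho A : ℝ≥0∞) * ∑' j, ∑' i, (Kmat A i j : ℝ≥0∞) * (‖x j‖₊ : ℝ≥0∞) ^ 2 := by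
        rw [ENNReal.tsum_comm]
    _ ≤ (rho A : ℝ≥0∞) * ∑' j, (rho A : ℝ≥0∞) * (‖x j‖₊ : ℝ≥0∞) ^ 2 := by
        gcongr with j
        rw [ENNReal.tsum_mul_right]
        gcongr
        exact Kmat_col_sum A j
    _ = (rho A : ℝ≥0∞) ^ 2 * ∑' j, (‖x j‖₊ : ℝ≥0∞) ^ 2 := by
        rw [ENNReal.tsum_mul_left, ← mul_assoc, ← pow_two]
    _ = (rho A : ℝ≥0∞) ^ 2 * (‖x‖₊ : ℝ≥0∞) ^ 2 := by rw [ell2_tsum_sq]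

lemma T_ne_top (A : ell2 →L[ℂ] ell2) (x : ell2) (i : ℕ+) : Tfun A x i ≠ ∞ := by
  intro h
  have h1 : Tfun A x i ^ 2 ≤ (rho A : ℝ≥0∞) ^ 2 * (‖x‖₊ : ℝ≥0∞) ^ 2 :=
    (ENNReal.le_tsum i).trans (schur A x)
  rw [h, pow_two, ENNReal.top_mul_top, top_le_iff] at h1
  exact (ENNReal.mul_ne_top (ENNReal.pow_ne_top ENNReal.coe_ne_top)
    (ENNReal.pow_ne_top ENNReal.coe_ne_top)) h1

lemma summable_term (A : ell2 →L[ℂ] ell2) (x : ell2) (i : ℕ+) :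
    Summable fun j => (Kmat A i j : ℝ) * ‖x j‖ := by
  have h : ∑' j, ((Kmat A i j * ‖x j‖₊ : ℝ≥0) : ℝ≥0∞) ≠ ∞ := by
    push_cast
    exact T_ne_top A x i
  have := ENNReal.tsum_coe_ne_top_iff_summable.1 h
  simpa [NNReal.coe_mul, coe_nnnorm] using NNReal.summable_coe.2 this

lemma summable_cterm (A : ell2 →L[ℂ] ell2) (x : ell2) (i : ℕ+) :
    Summable fun j => (((Kmat A i j : ℝ) : ℂ)) * x j := by
  refine Summable.of_norm ?_
  refine (summable_term A x i).congr fun j => ?_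
  rw [norm_mul, Complex.norm_real, Real.norm_of_nonneg (Kmat A i j).coe_nonneg]

noncomputable def Bfun (A : ell2 →L[ℂ] ell2) (x : ell2) (i : ℕ+) : ℂ :=
  ∑' j, (((Kmat A i j : ℝ) : ℂ)) * x j

lemma nnnorm_Bfun_le (A : ell2 →L[ℂ] ell2) (x : ell2) (i : ℕ+) :
    (‖Bfun A x i‖₊ : ℝ≥0∞) ≤ Tfun A x i := by
  have hn : Summable fun j => ‖(((Kmat A i j : ℝ) : ℂ)) * x j‖ := by
    refine (summable_term A x i).congr fun j => ?_
    rw [norm_mul, Complex.norm_real, Real.norm_of_nonneg (Kmat A i j).coe_nonneg]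
  calc (‖Bfun A x i‖₊ : ℝ≥0∞) = ENNReal.ofReal ‖Bfun A x i‖ :=
        (ofReal_norm _).symm
    _ ≤ ENNReal.ofReal (∑' j, ‖(((Kmat A i j : ℝ) : ℂ)) * x j‖) :=
        ENNReal.ofReal_le_ofReal (norm_tsum_le_tsum_norm hn)
    _ = ∑' j, ENNReal.ofReal ‖(((Kmat A i j : ℝ) : ℂ)) * x j‖ :=
        ENNReal.ofReal_tsum_of_nonneg (fun j => norm_nonneg _) hn
    _ = Tfun A x i := by
        refine tsum_congr fun j => ?_
        rw [ofReal_norm, enorm_eq_nnnorm, nnnorm_mul, ENNReal.coe_mul]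
        congr 2
        ext
        simp [Real.norm_of_nonneg (Kmat A i j).coe_nonneg]

lemma memℓp_of_tsum_sq {f : ∀ _ : ℕ+, ℂ} {M : ℝ≥0∞} (hM : M ≠ ∞)
    (h : ∑' i, (‖f i‖₊ : ℝ≥0∞) ^ 2 ≤ M) : Memℓp f 2 := by
  have hne : ∑' i, ((‖f i‖₊ ^ 2 : ℝ≥0) : ℝ≥0∞) ≠ ∞ := by
    push_cast
    exact (h.trans_lt hM.lt_top).ne
  have hs : Summable fun i => ‖f i‖₊ ^ 2 := ENNReal.tsum_coe_ne_top_iff_summable.1 hne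
  have hr : Summable fun i => ‖f i‖ ^ (2 : ℕ) := by
    simpa [NNReal.coe_pow, coe_nnnorm] using NNReal.summable_coe.2 hs
  apply memℓp_gen
  simpa [show ((2:ℝ≥0∞)).toReal = ((2:ℕ):ℝ) from by norm_num, Real.rpow_natCast] using hr

lemma norm_le_of_tsum_sq (g : ell2) (M : ℝ≥0)
    (h : ∑' i, (‖g i‖₊ : ℝ≥0∞) ^ 2 ≤ (M : ℝ≥0∞) ^ 2) : ‖g‖ ≤ M := by
  rw [ell2_tsum_sq] at h
  have h2 : (‖g‖₊ : ℝ≥0∞) ≤ (M : ℝ≥0∞) := ennreal_le_of_sq_le_sq h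
  have h3 : ‖g‖₊ ≤ M := ENNReal.coe_le_coe.1 h2
  exact_mod_cast h3

lemma tsum_sq_Bfun_le (A : ell2 →L[ℂ] ell2) (x : ell2) :
    ∑' i, (‖Bfun A x i‖₊ : ℝ≥0∞) ^ 2 ≤ ((rho A * ‖x‖₊ : ℝ≥0) : ℝ≥0∞) ^ 2 := by
  calc ∑' i, (‖Bfun A x i‖₊ : ℝ≥0∞) ^ 2 ≤ ∑' i, Tfun A x i ^ 2 := by
        gcongr with i
        exact nnnorm_Bfun_le A x i
    _ ≤ (rho A : ℝ≥0∞) ^ 2 * (‖x‖₊ : ℝ≥0∞) ^ 2 := schur A x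
    _ = ((rho A * ‖x‖₊ : ℝ≥0) : ℝ≥0∞) ^ 2 := by push_cast; ring

lemma mem_Bfun (A : ell2 →L[ℂ] ell2) (x : ell2) : Memℓp (Bfun A x) 2 :=
  memℓp_of_tsum_sq (ENNReal.pow_ne_top ENNReal.coe_ne_top) (tsum_sq_Bfun_le A x)

noncomputable def Bop (A : ell2 →L[ℂ] ell2) : ell2 →L[ℂ] ell2 :=
  LinearMap.mkContinuous
    { toFun := fun x => (⟨Bfun A x, mem_Bfun A x⟩ : ell2)
      map_add' := by
        intro x y
        refine Subtype.ext (funext fun i => ?_)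
        show Bfun A (x + y) i = Bfun A x i + Bfun A y i
        unfold Bfun
        rw [← Summable.tsum_add (summable_cterm A x i) (summable_cterm A y i)]
        refine tsum_congr fun j => ?_
        have : (x + y) j = x j + y j := by rw [lp.coeFn_add]; rfl
        rw [this, mul_add]
      map_smul' := by
        intro c x
        refine Subtype.ext (funext fun i => ?_)
        show Bfun A (c • x) i = c * Bfun A x i
        unfold Bfun
        rw [← (summable_cterm A x i).tsum_mul_left c]
        refine tsum_congr fun j => ?_
        have : (c • x) j = c * x j := by rw [lp.coeFn_smul]; rfl
        rw [this]; ring }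
    (rho A)
    (by
      intro x
      refine le_trans (norm_le_of_tsum_sq _ (rho A * ‖x‖₊) ?_) ?_
      · exact tsum_sq_Bfun_le A x
      · push_cast [coe_nnnorm]
        exact le_refl _)

lemma norm_Bop_le (A : ell2 →L[ℂ] ell2) : ‖Bop A‖ ≤ (rho A : ℝ) :=
  LinearMap.mkContinuous_norm_le _ (rho A).coe_nonneg _

lemma Kmat_val (A : ell2 →L[ℂ] ell2) (i j : ℕ+) :
    ((Kmat A i j : ℝ)) = ‖entry A i j‖ / (1 + |(i:ℝ) - (j:ℝ)|) := by
  have habs : ((((i:ℤ) - (j:ℤ)).natAbs : ℝ)) = |(i:ℝ) - (j:ℝ)| := by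
    rw [Nat.cast_natAbs]
    push_cast
    ring_nf
  rw [Kmat, wgt]
  push_cast
  rw [habs, div_eq_mul_inv]

lemma entry_Bop (A : ell2 →L[ℂ] ell2) (i j : ℕ+) :
    entry (Bop A) i j = ((Kmat A i j : ℝ) : ℂ) := by
  have h : entry (Bop A) i j = Bfun A (lp.single 2 j 1) i := rfl
  rw [h, Bfun]
  rw [tsum_eq_single j]
  · rw [lp.single_apply_self, mul_one]
  · intro j' hj'
    rw [lp.single_apply_ne 2 j _ hj', mul_zero]

/-- There is an absolute constant `C` such that for every bounded operator `A` on `ℓ²`,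
the matrix `Ã_i^j = |A_i^j|/(1+|i-j|)` defines a bounded operator on `ℓ²` with
`‖Ã‖ ≤ C‖A‖`. -/
theorem stmt3 : ∃ C : ℝ, 0 < C ∧ ∀ A : ell2 →L[ℂ] ell2,
    ∃ B : ell2 →L[ℂ] ell2,
      (∀ i j : ℕ+, entry B i j = ((‖entry A i j‖ / (1 + |(i:ℝ) - (j:ℝ)|) : ℝ) : ℂ)) ∧
      ‖B‖ ≤ C * ‖A‖ := by
  refine ⟨(NNReal.sqrt s0 : ℝ), ?_, fun A => ⟨Bop A, fun i j => ?_, ?_⟩⟩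
  · have h1 : (1:ℝ≥0) ≤ NNReal.sqrt s0 := by
      rw [← NNReal.sqrt_one]
      exact NNReal.sqrt_le_sqrt.2 one_le_s0
    have : (1:ℝ) ≤ (NNReal.sqrt s0 : ℝ) := by exact_mod_cast h1
    linarith
  · rw [entry_Bop, Kmat_val]
  · refine (norm_Bop_le A).trans ?_
    rw [rho]
    push_cast [coe_nnnorm]
    rw [mul_comm]
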